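/- Expressivity-gap inequality (core of Conclusion 5.7, Case 1): for every natural number p ≥ 13 and real numbers m ≥ 9, H, n with 1 ≤ H ≤ m/2 and 1 ≤ n ≤ m², the inequality 2^p · log₃(2·H·m²·n²) ≤ 3^{p−2} · log₃(m − H) holds. (The left side dominates the log-separation-rank upper bound of a depth-p squared-activation mlp-based architecture, while the right side is a lower bound on the log-separation-rank of a depth-p attention architecture for some weight assignment.) -/

import Mathlib

lemma pow_gap_aux (k : ℕ) : (14 : ℝ) * 2 ^ (k + 13) ≤ 3 ^ (k + 11) := by
  induction k with
  | zero => norm_num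
  | succ k ih =>
      have h2 : (0:ℝ) ≤ 2 ^ (k + 13) := by positivity
      have e1 : (k + 1) + 13 = (k + 13) + 1 := by ring
      have e2 : (k + 1) + 11 = (k + 11) + 1 := by ring
      have a1 : (2:ℝ) ^ (k + 1 + 13) = 2 * 2 ^ (k + 13) := by rw [e1, pow_succ]; ring
      have a2 : (3:ℝ) ^ (k + 1 + 11) = 3 * 3 ^ (k + 11) := by rw [e2, pow_succ]; ring
      rw [a1, a2]; nlinarith [ih]

/-- expressivity-gap inequality (core of Conclusion 5.7, Case 1). -/
theorem expressivity_gap (p : ℕ) (hp : 13 ≤ p) (m H n : ℝ) (hm : 9 ≤ m)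
    (hH1 : 1 ≤ H) (hH2 : H ≤ m / 2) (hn1 : 1 ≤ n) (hn2 : n ≤ m ^ 2) :
    (2 : ℝ) ^ p * Real.logb 3 (2 * H * m ^ 2 * n ^ 2)
      ≤ 3 ^ (p - 2) * Real.logb 3 (m - H) := by
  obtain ⟨k, rfl⟩ : ∃ k, p = k + 13 := ⟨p - 13, by omega⟩
  have hp2 : (k + 13) - 2 = k + 11 := by omega
  rw [hp2]
  have hm0 : (0:ℝ) < m := by linarith
  set L := Real.logb 3 m with hLdef
  have hL : 0 ≤ L := Real.logb_nonneg (by norm_num) (by linarith)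
  -- Step 1: left log ≤ 7 L
  have hn4 : n ^ 2 ≤ (m ^ 2) ^ 2 := pow_le_pow_left₀ (by linarith) hn2 2
  have hprod : 2 * H * m ^ 2 * n ^ 2 ≤ m ^ 7 := by
    nlinarith [mul_le_mul_of_nonneg_right (show 2 * H ≤ m by linarith)
        (show (0:ℝ) ≤ m ^ 2 * n ^ 2 by positivity),
      mul_le_mul_of_nonneg_left hn4 (show (0:ℝ) ≤ m * m ^ 2 by positivity)]
  have hpos : (0:ℝ) < 2 * H * m ^ 2 * n ^ 2 := by positivity
  have hlog1 : Real.logb 3 (2 * H * m ^ 2 * n ^ 2) ≤ 7 * L := by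
    calc Real.logb 3 (2 * H * m ^ 2 * n ^ 2) ≤ Real.logb 3 (m ^ 7) :=
          Real.logb_le_logb_of_le (by norm_num) hpos hprod
      _ = 7 * L := by rw [Real.logb_pow]; norm_num; exact hLdef.symm
  -- Step 2: L / 2 ≤ logb 3 (m - H)
  have hsqrt : Real.sqrt m ≤ m - H := by
    have h1 : Real.sqrt m ≤ m / 2 := by
      have : Real.sqrt m ≤ Real.sqrt ((m / 2) ^ 2) := by
        apply Real.sqrt_le_sqrt; nlinarith
      rwa [Real.sqrt_sq (by linarith)] at this
    linarith
  have hsqrtpos : (0:ℝ) < Real.sqrt m := Real.sqrt_pos.mpr hm0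
  have hlog2 : L / 2 ≤ Real.logb 3 (m - H) := by
    have heq : Real.logb 3 (Real.sqrt m) = L / 2 := by
      rw [hLdef, Real.logb, Real.logb, Real.log_sqrt hm0.le]; ring
    calc L / 2 = Real.logb 3 (Real.sqrt m) := heq.symm
      _ ≤ Real.logb 3 (m - H) := Real.logb_le_logb_of_le (by norm_num) hsqrtpos hsqrt
  -- combine
  have hgap := pow_gap_aux k
  have h2p : (0:ℝ) ≤ 2 ^ (k + 13) := by positivity
  have h3p : (0:ℝ) ≤ 3 ^ (k + 11) := by positivity
  calc (2:ℝ) ^ (k + 13) * Real.logb 3 (2 * H * m ^ 2 * n ^ 2)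
      ≤ 2 ^ (k + 13) * (7 * L) := by
        exact mul_le_mul_of_nonneg_left hlog1 h2p
    _ = (14 * 2 ^ (k + 13)) * (L / 2) := by ring
    _ ≤ 3 ^ (k + 11) * (L / 2) := by
        apply mul_le_mul_of_nonneg_right hgap; linarith
    _ ≤ 3 ^ (k + 11) * Real.logb 3 (m - H) :=
        mul_le_mul_of_nonneg_left hlog2 h3p
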